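/- Let n, m ∈ ℕ with m ≤ n. Let a : {1, …, n} → ℕ be a nondecreasing function (arrival slots) and let t_1 < t_2 < … < t_m be natural numbers (service slots). Call an injective map σ : {1, …, m} → {1, …, n} a feasible schedule if a(σ(r)) ≤ t_r for every r ≤ m. Suppose σ_L is a feasible schedule with the greedy (LCFS) property: for every r ≤ m, σ_L(r) = max{ i ∈ {1, …, n} : a(i) ≤ t_r and i ∉ {σ_L(1), …, σ_L(r−1)} }. Then for every feasible schedule σ, every r ≤ m, and every j ≤ r, the j-th smallest element of {σ_L(1), …, σ_L(r)} is greater than or equal to the j-th smallest element of {σ(1), …, σ(r)}. -/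

import Mathlib

open Finset

lemma sorted_get_le_of_counts {S T : Finset ℕ} {r : ℕ} (hS : S.card = r) (hT : T.card = r)
    (h : ∀ x : ℕ, (S.filter (fun y => x ≤ y)).card ≤ (T.filter (fun y => x ≤ y)).card)
    (j : ℕ) (hjS : j < (S.sort (· ≤ ·)).length) (hjT : j < (T.sort (· ≤ ·)).length) :
    (S.sort (· ≤ ·)).get ⟨j, hjS⟩ ≤ (T.sort (· ≤ ·)).get ⟨j, hjT⟩ := by
  by_contra hlt
  push_neg at hlt
  set x : ℕ := (S.sort (· ≤ ·)).get ⟨j, hjS⟩ with hx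
  -- lower bound on S side
  have hlenS : (S.sort (· ≤ ·)).length = r := by rw [Finset.length_sort, hS]
  have hlenT : (T.sort (· ≤ ·)).length = r := by rw [Finset.length_sort, hT]
  have hSmono : StrictMono (S.sort (· ≤ ·)).get := (Finset.sortedLT_sort S).strictMono_get
  have hTmono : StrictMono (T.sort (· ≤ ·)).get := (Finset.sortedLT_sort T).strictMono_get
  have h1 : r - j ≤ (S.filter (fun y => x ≤ y)).card := by
    have := Finset.card_le_card_of_injOn (f := fun k : Fin (S.sort (· ≤ ·)).length => (S.sort (· ≤ ·)).get k)
      (s := Finset.Ici (⟨j, hjS⟩ : Fin (S.sort (· ≤ ·)).length))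
      (t := S.filter (fun y => x ≤ y))
      (by
        intro k hk
        simp only [Finset.mem_coe, Finset.mem_Ici] at hk
        simp only [Finset.mem_coe, Finset.mem_filter]
        constructor
        · rw [← Finset.mem_sort (α := ℕ) (· ≤ ·)]
          exact List.get_mem _ k
        · exact hSmono.monotone hk)
      (fun k _ k' _ hkk => hSmono.injective hkk)
    rw [Fin.card_Ici] at this
    simp only [Fin.val_mk] at this
    omega
  have h2 : (T.filter (fun y => x ≤ y)).card ≤ r - j - 1 := by
    have hsub : T.filter (fun y => x ≤ y) ⊆
        (Finset.Ioi (⟨j, hjT⟩ : Fin (T.sort (· ≤ ·)).length)).image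
          (fun k => (T.sort (· ≤ ·)).get k) := by
      intro y hy
      simp only [Finset.mem_filter] at hy
      obtain ⟨hyT, hxy⟩ := hy
      rw [← Finset.mem_sort (α := ℕ) (· ≤ ·), List.mem_iff_get] at hyT
      obtain ⟨k, hk⟩ := hyT
      simp only [Finset.mem_image]
      refine ⟨k, ?_, hk⟩
      simp only [Finset.mem_Ioi]
      by_contra hkj
      push_neg at hkj
      have : (T.sort (· ≤ ·)).get k ≤ (T.sort (· ≤ ·)).get ⟨j, hjT⟩ := hTmono.monotone hkj
      omega
    calc (T.filter (fun y => x ≤ y)).card ≤ _ := Finset.card_le_card hsub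
      _ ≤ (Finset.Ioi (⟨j, hjT⟩ : Fin (T.sort (· ≤ ·)).length)).card := Finset.card_image_le
      _ = r - j - 1 := by rw [Fin.card_Ioi]; simp only [Fin.val_mk]; omega
  have := h x
  have hjr : j < r := by omega
  omega

open Finset

lemma lcfs_count_le (n m : ℕ)
    (a : ℕ → ℕ)
    (t : ℕ → ℕ) (ht : StrictMonoOn t (Set.Icc 1 m))
    (σL : ℕ → ℕ)
    (hσL_mem : ∀ r ∈ Set.Icc 1 m, σL r ∈ Set.Icc 1 n)
    (hσL_greedy : ∀ r ∈ Set.Icc 1 m,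
      ((Finset.Icc 1 n).filter
        (fun i => a i ≤ t r ∧ ∀ r' : ℕ, 1 ≤ r' → r' < r → σL r' ≠ i)).max
        = (σL r : WithBot ℕ))
    (σ : ℕ → ℕ)
    (hσ_inj : Set.InjOn σ (Set.Icc 1 m))
    (hσ_mem : ∀ r ∈ Set.Icc 1 m, σ r ∈ Set.Icc 1 n)
    (hσ_feas : ∀ r ∈ Set.Icc 1 m, a (σ r) ≤ t r) :
    ∀ r : ℕ, r ≤ m → ∀ x : ℕ,
      ((Finset.Icc 1 r).filter (fun r' => x ≤ σ r')).card
        ≤ ((Finset.Icc 1 r).filter (fun r' => x ≤ σL r')).card := by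
  intro r
  induction r with
  | zero => intro _ x; simp
  | succ r ih =>
    intro hrm x
    have hrm' : r ≤ m := by omega
    have hmem : (r + 1) ∈ Set.Icc 1 m := by
      simp only [Set.mem_Icc]; omega
    have hIcc : Finset.Icc 1 (r + 1) = insert (r + 1) (Finset.Icc 1 r) := by
      ext k; simp only [Finset.mem_Icc, Finset.mem_insert]; omega
    have hnotmem : (r + 1) ∉ Finset.Icc 1 r := by simp
    -- card of filter over insert
    have cardσ : ∀ (f : ℕ → ℕ),
        ((Finset.Icc 1 (r+1)).filter (fun r' => x ≤ f r')).card
          = ((Finset.Icc 1 r).filter (fun r' => x ≤ f r')).card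
            + (if x ≤ f (r+1) then 1 else 0) := by
      intro f
      rw [hIcc, Finset.filter_insert]
      split
      · rw [Finset.card_insert_of_notMem (fun hc => hnotmem (Finset.mem_of_mem_filter _ hc))]
      · simp
    by_cases hx : x ≤ σL (r + 1)
    · have h1 := cardσ σ
      have h2 := cardσ σL
      have := ih hrm' x
      rw [h1, h2]
      simp only [hx, if_true]
      split <;> omega
    · -- greedy serves a low sample: all available high samples already served by σL
      push_neg at hx
      have key : ∀ i, i ∈ (Finset.Icc x n).filter (fun i => a i ≤ t (r+1)) →
          ∃ r' ∈ (Finset.Icc 1 r).filter (fun r' => x ≤ σL r'), σL r' = i := by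
        intro i hi
        simp only [Finset.mem_filter, Finset.mem_Icc] at hi
        obtain ⟨⟨hxi, hin⟩, hai⟩ := hi
        have hx1 : 1 ≤ x := by
          have := hσL_mem (r+1) hmem
          simp only [Set.mem_Icc] at this
          omega
        by_cases hserved : ∃ r', 1 ≤ r' ∧ r' ≤ r ∧ σL r' = i
        · obtain ⟨r', h1, h2, h3⟩ := hserved
          exact ⟨r', by simp only [Finset.mem_filter, Finset.mem_Icc]; exact ⟨⟨h1, h2⟩, by omega⟩, h3⟩
        · exfalso
          push_neg at hserved
          have hmemfil : i ∈ (Finset.Icc 1 n).filter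
              (fun i => a i ≤ t (r+1) ∧ ∀ r' : ℕ, 1 ≤ r' → r' < r+1 → σL r' ≠ i) := by
            simp only [Finset.mem_filter, Finset.mem_Icc]
            refine ⟨⟨by omega, hin⟩, hai, ?_⟩
            intro r' h1 h2
            exact hserved r' h1 (by omega)
          have hle : (i : WithBot ℕ) ≤ ((σL (r+1) : ℕ) : WithBot ℕ) := by
            rw [← hσL_greedy (r+1) hmem]
            exact Finset.le_max hmemfil
          have : i ≤ σL (r+1) := by exact_mod_cast hle
          omega
      -- σ's served high samples inject into the available high samples
      have hstep1 : ((Finset.Icc 1 (r+1)).filter (fun r' => x ≤ σ r')).card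
          ≤ ((Finset.Icc x n).filter (fun i => a i ≤ t (r+1))).card := by
        apply Finset.card_le_card_of_injOn σ
        · intro r' hr'
          simp only [Finset.mem_coe, Finset.mem_filter, Finset.mem_Icc] at hr' ⊢
          obtain ⟨⟨h1, h2⟩, h3⟩ := hr'
          have hr'm : r' ∈ Set.Icc 1 m := by simp only [Set.mem_Icc]; omega
          have hm := hσ_mem r' hr'm
          simp only [Set.mem_Icc] at hm
          refine ⟨⟨h3, hm.2⟩, ?_⟩
          calc a (σ r') ≤ t r' := hσ_feas r' hr'm
            _ ≤ t (r+1) := ht.monotoneOn (by simp only [Set.mem_Icc]; omega) hmem (by omega)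
        · intro u hu v hv huv
          simp only [Finset.mem_coe, Finset.mem_filter, Finset.mem_Icc] at hu hv
          exact hσ_inj (by simp only [Set.mem_Icc]; omega) (by simp only [Set.mem_Icc]; omega) huv
      -- available high samples are covered by σL's earlier services
      have hstep2 : ((Finset.Icc x n).filter (fun i => a i ≤ t (r+1))).card
          ≤ ((Finset.Icc 1 r).filter (fun r' => x ≤ σL r')).card := by
        apply Finset.card_le_card_of_surjOn σL
        intro i hi
        obtain ⟨r', hr', hr'i⟩ := key i hi
        exact ⟨r', hr', hr'i⟩
      have h2 := cardσ σL
      calc ((Finset.Icc 1 (r+1)).filter (fun r' => x ≤ σ r')).card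
          ≤ ((Finset.Icc 1 r).filter (fun r' => x ≤ σL r')).card := le_trans hstep1 hstep2
        _ ≤ ((Finset.Icc 1 (r+1)).filter (fun r' => x ≤ σL r')).card := by rw [h2]; omega


/-- Lemma 6 (indices-ordering-lcfs): samples `1, …, n` arrive at slots given
by the nondecreasing function `a`; services happen at strictly increasing
slots `t 1 < … < t m`.  A schedule `σ : {1, …, m} → {1, …, n}` is feasible
if it is injective and `a (σ r) ≤ t r` for all `r`.  If `σL` is the greedy
(LCFS) feasible schedule, which at each service slot serves the available,
not-yet-served sample of largest index, then for every feasible schedule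
`σ`, every `r ≤ m` and every `j`, the `j`-th smallest element of
`{σL 1, …, σL r}` is at least the `j`-th smallest element of
`{σ 1, …, σ r}` (position-by-position comparison of the sorted lists). -/
theorem indices_ordering_lcfs (n m : ℕ) (hmn : m ≤ n)
    (a : ℕ → ℕ) (ha : MonotoneOn a (Set.Icc 1 n))
    (t : ℕ → ℕ) (ht : StrictMonoOn t (Set.Icc 1 m))
    (σL : ℕ → ℕ)
    (hσL_inj : Set.InjOn σL (Set.Icc 1 m))
    (hσL_mem : ∀ r ∈ Set.Icc 1 m, σL r ∈ Set.Icc 1 n)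
    (hσL_feas : ∀ r ∈ Set.Icc 1 m, a (σL r) ≤ t r)
    (hσL_greedy : ∀ r ∈ Set.Icc 1 m,
      ((Finset.Icc 1 n).filter
        (fun i => a i ≤ t r ∧ ∀ r' : ℕ, 1 ≤ r' → r' < r → σL r' ≠ i)).max
        = (σL r : WithBot ℕ)) :
    ∀ (σ : ℕ → ℕ),
      Set.InjOn σ (Set.Icc 1 m) →
      (∀ r ∈ Set.Icc 1 m, σ r ∈ Set.Icc 1 n) →
      (∀ r ∈ Set.Icc 1 m, a (σ r) ≤ t r) →
      ∀ r : ℕ, r ∈ Set.Icc 1 m →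
        ∀ (j : ℕ)
          (hjL : j < (((Finset.Icc 1 r).image σL).sort (· ≤ ·)).length)
          (hjA : j < (((Finset.Icc 1 r).image σ).sort (· ≤ ·)).length),
          (((Finset.Icc 1 r).image σ).sort (· ≤ ·)).get ⟨j, hjA⟩
            ≤ (((Finset.Icc 1 r).image σL).sort (· ≤ ·)).get ⟨j, hjL⟩ := by
  intro σ hσ_inj hσ_mem hσ_feas r hr j hjL hjA
  simp only [Set.mem_Icc] at hr
  have hsub : ∀ k ∈ Finset.Icc 1 r, k ∈ Set.Icc 1 m := by
    intro k hk
    simp only [Finset.mem_Icc] at hk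
    simp only [Set.mem_Icc]; omega
  have hcard : ∀ (f : ℕ → ℕ), Set.InjOn f (Set.Icc 1 m) →
      ((Finset.Icc 1 r).image f).card = r := by
    intro f hf
    rw [Finset.card_image_of_injOn (fun u hu v hv huv => hf (hsub u hu) (hsub v hv) huv),
      Nat.card_Icc]
    omega
  have hfilt : ∀ (f : ℕ → ℕ), Set.InjOn f (Set.Icc 1 m) → ∀ x : ℕ,
      (((Finset.Icc 1 r).image f).filter (fun y => x ≤ y)).card
        = ((Finset.Icc 1 r).filter (fun r' => x ≤ f r')).card := by
    intro f hf x
    rw [Finset.filter_image]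
    exact Finset.card_image_of_injOn fun u hu v hv huv =>
      hf (hsub u (Finset.mem_of_mem_filter _ hu)) (hsub v (Finset.mem_of_mem_filter _ hv)) huv
  exact sorted_get_le_of_counts (hcard σ hσ_inj) (hcard σL hσL_inj)
    (fun x => by
      rw [hfilt σ hσ_inj x, hfilt σL hσL_inj x]
      exact lcfs_count_le n m a t ht σL hσL_mem hσL_greedy σ hσ_inj hσ_mem hσ_feas r hr.2 x)
    j hjA hjL
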